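/- Let n ≥ 2, let σ ∈ {1,…,n−1} be an integer, α ∈ (0, n−σ), let E := {x ∈ ℝⁿ : x_{σ+1} = ⋯ = x_n = 0}, and let μ be the σ-dimensional Hausdorff measure restricted to E ∩ B(0,2). Then there is a constant c > 0 depending only on n, σ, α such that for every x ∈ B(0,1) with 0 < dist(x,E) ≤ 1/2, M_α^σ μ(x) ≥ c·dist(x,E)^{σ−n+α}, where the supremum in M_α^σ is taken over 0 < r ≤ 4. -/

import Mathlib

noncomputable section
open MeasureTheory Metric Set Filter
open scoped ENNReal Topology NNReal

abbrev Euc (n : ℕ) := EuclideanSpace ℝ (Fin n)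

/-- The capped fractional maximal function of a measure `μ`, with radii up to `D`. -/
def cappedFracMaximal {n : ℕ} (D : ℝ) (μ : Measure (Euc n)) (σ α : ℝ) (x : Euc n) :
    ℝ≥0∞ :=
  ⨆ r ∈ Set.Ioc (0 : ℝ) D,
    min (μ (ball x r)) (ENNReal.ofReal (r ^ σ)) / (volume (ball x r)) ^ (1 - α / n)

/-- lower bound for the capped fractional maximal function of the
`σ`-dimensional Hausdorff measure on a `σ`-plane, in terms of the distance to the plane. -/
theorem cappedFracMaximal_lower_bound
    (n : ℕ) (hn : 2 ≤ n) (σ : ℕ) (hσ1 : 1 ≤ σ) (hσn : σ ≤ n - 1)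
    (α : ℝ) (hα : α ∈ Set.Ioo (0 : ℝ) ((n : ℝ) - σ))
    (E : Set (Euc n)) (hE : E = {x : Euc n | ∀ i : Fin n, σ ≤ (i : ℕ) → x i = 0})
    (μ : Measure (Euc n)) (hμ : μ = (μH[(σ : ℝ)]).restrict (E ∩ ball 0 2)) :
    ∃ c : ℝ, 0 < c ∧
      ∀ x ∈ ball (0 : Euc n) 1, 0 < infDist x E → infDist x E ≤ 1 / 2 →
        ENNReal.ofReal (c * infDist x E ^ ((σ : ℝ) - n + α)) ≤
          cappedFracMaximal 4 μ σ α x := by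
  obtain ⟨hα0, hαn⟩ := hα
  have hσn' : σ ≤ n := hσn.trans (Nat.sub_le n 1)
  have hn0 : (0:ℝ) < n := by exact_mod_cast Nat.lt_of_lt_of_le Nat.zero_lt_two hn
  have hσpos : (0:ℝ) < σ := by exact_mod_cast hσ1
  have hσltn : (σ:ℝ) < n := by
    have : σ < n := Nat.lt_of_le_of_lt hσn (Nat.sub_lt (by omega) one_pos)
    exact_mod_cast this
  have hαltn : α < n := by linarith
  have hsq0 : (0:ℝ) < Real.sqrt n := Real.sqrt_pos.2 hn0
  have hsq1 : (1:ℝ) ≤ Real.sqrt n := by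
    rw [show (1:ℝ) = Real.sqrt 1 by simp]
    exact Real.sqrt_le_sqrt (by exact_mod_cast Nat.one_le_of_lt hn)
  set β : ℝ := 1 - α / n with hβdef
  have hβpos : 0 < β := by
    have : α / n < 1 := (div_lt_one hn0).2 hαltn
    simp only [hβdef]; linarith
  have hnβ : (n:ℝ) * β = (n:ℝ) - α := by
    rw [hβdef, mul_sub, mul_one, mul_div_assoc', mul_div_right_comm, div_self hn0.ne', one_mul]
  -- the volume of the unit ball
  set v : ℝ := (volume (ball (0:Euc n) 1)).toReal with hvdef
  have hvne : volume (ball (0:Euc n) 1) ≠ ⊤ := measure_ball_lt_top.ne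
  have hvpos : 0 < v :=
    ENNReal.toReal_pos (measure_ball_pos _ _ one_pos).ne' hvne
  have hvofReal : ENNReal.ofReal v = volume (ball (0:Euc n) 1) := ENNReal.ofReal_toReal hvne
  -- constants
  set A : ℝ := Real.sqrt n ^ σ with hAdef
  set B : ℝ := (2:ℝ) ^ ((n:ℝ) - α) with hBdef
  set C : ℝ := v ^ β with hCdef
  have hA : 0 < A := by positivity
  have hB : 0 < B := Real.rpow_pos_of_pos two_pos _
  have hC : 0 < C := Real.rpow_pos_of_pos hvpos _
  refine ⟨(A * B * C)⁻¹, by positivity, ?_⟩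
  intro x hx hd0 hd2
  set d : ℝ := infDist x E with hddef
  have hxnorm : ‖x‖ < 1 := mem_ball_zero_iff.1 hx
  have h0E : (0:Euc n) ∈ E := by
    rw [hE]; intro i _; rfl
  obtain ⟨y, hyE, hxy⟩ := (infDist_lt_iff ⟨0, h0E⟩).1
    (show infDist x E < (5/4) * d by rw [← hddef]; linarith)
  have hyE' : ∀ i : Fin n, σ ≤ (i:ℕ) → y i = 0 := by rw [hE] at hyE; exact hyE
  set t : ℝ := d / (2 * Real.sqrt n) with htdef
  have ht0 : 0 < t := by positivity
  have h2d : 0 < 2 * d := by linarith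
  have h2d4 : 2 * d ≤ 4 := by linarith
  have hsqt : Real.sqrt n * t = d / 2 := by
    rw [htdef]; field_simp
  -- the projection onto the first σ coordinates
  set π : Euc n → (Fin σ → ℝ) := fun z j => z (Fin.castLE hσn' j) with hπdef
  have hπlip : LipschitzWith 1 π := by
    refine LipschitzWith.of_dist_le_mul fun z w => ?_
    rw [NNReal.coe_one, one_mul]
    refine (dist_pi_le_iff dist_nonneg).2 fun j => ?_
    rw [EuclideanSpace.dist_eq]
    have h1 : dist (π z j) (π w j) ^ 2 ≤ ∑ i, dist (z i) (w i) ^ 2 := by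
      refine Finset.single_le_sum (f := fun i => dist (z i) (w i) ^ 2)
        (fun i _ => sq_nonneg _) (Finset.mem_univ (Fin.castLE hσn' j))
    calc dist (π z j) (π w j) = Real.sqrt (dist (π z j) (π w j) ^ 2) := by
          rw [Real.sqrt_sq dist_nonneg]
      _ ≤ Real.sqrt (∑ i, dist (z i) (w i) ^ 2) := Real.sqrt_le_sqrt h1
  -- the key set
  set S : Set (Euc n) := (E ∩ ball 0 2) ∩ ball x (2 * d) with hSdef
  have hsub : Metric.ball (π y) t ⊆ π '' S := by
    intro u hu
    have hu' : dist u (π y) < t := mem_ball.1 hu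
    set z : Euc n := (WithLp.equiv 2 (Fin n → ℝ)).symm
      (fun i => if h : (i:ℕ) < σ then u ⟨(i:ℕ), h⟩ else 0) with hzdef
    have hzi : ∀ i : Fin n, z i = if h : (i:ℕ) < σ then u ⟨(i:ℕ), h⟩ else 0 := fun i => rfl
    have hzy : dist z y ≤ d / 2 := by
      rw [EuclideanSpace.dist_eq]
      have hb : ∀ i : Fin n, dist (z i) (y i) ^ 2 ≤ t ^ 2 := by
        intro i
        by_cases h : (i:ℕ) < σ
        · have hz1 : z i = u ⟨(i:ℕ), h⟩ := by rw [hzi]; simp [h]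
          have hy1 : y (Fin.castLE hσn' ⟨(i:ℕ), h⟩) = y i := by
            rfl
          have h2 : dist (u ⟨(i:ℕ), h⟩) (π y ⟨(i:ℕ), h⟩) ≤ dist u (π y) :=
            dist_le_pi_dist u (π y) _
          have h3 : dist (z i) (y i) ≤ t := by
            rw [hz1, ← hy1]
            exact le_trans h2 hu'.le
          exact pow_le_pow_left₀ dist_nonneg h3 2
        · have hz0 : z i = 0 := by rw [hzi]; simp [h]
          have hy0 : y i = 0 := hyE' i (not_lt.1 h)
          rw [hz0, hy0, dist_self]
          simpa using sq_nonneg t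
      calc Real.sqrt (∑ i, dist (z i) (y i) ^ 2)
          ≤ Real.sqrt (∑ _i : Fin n, t ^ 2) :=
            Real.sqrt_le_sqrt (Finset.sum_le_sum fun i _ => hb i)
        _ = Real.sqrt ((n : ℝ) * t ^ 2) := by
            rw [Finset.sum_const, Finset.card_univ, Fintype.card_fin, nsmul_eq_mul]
        _ = Real.sqrt n * t := by
            rw [Real.sqrt_mul (le_of_lt hn0), Real.sqrt_sq ht0.le]
        _ = d / 2 := hsqt
    have hzx : dist z x < 2 * d := by
      calc dist z x ≤ dist z y + dist y x := dist_triangle z y x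
        _ < d / 2 + (5/4) * d := by
            rw [dist_comm y x]; exact add_lt_add_of_le_of_lt hzy hxy
        _ ≤ 2 * d := by linarith
    have hzE : z ∈ E := by
      rw [hE]; intro i hi
      rw [hzi]; simp [Nat.not_lt.2 hi]
    have hz2 : z ∈ ball (0 : Euc n) 2 := by
      rw [mem_ball_zero_iff]
      calc ‖z‖ = dist z 0 := by rw [dist_zero_right]
        _ ≤ dist z x + dist x 0 := dist_triangle z x 0
        _ < 2 * d + 1 := by
            rw [dist_zero_right]
            exact add_lt_add_of_le_of_lt hzx.le hxnorm
        _ ≤ 2 := by linarith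
    refine ⟨z, ⟨⟨hzE, hz2⟩, mem_ball.2 hzx⟩, ?_⟩
    funext j
    have : ((Fin.castLE hσn' j : Fin n) : ℕ) < σ := j.2
    simp only [hπdef, hzi, this, dif_pos]
    exact congrArg u (Fin.ext rfl)
  -- E is measurable
  have hEclosed : IsClosed E := by
    rw [hE]
    have : {x : Euc n | ∀ i : Fin n, σ ≤ (i:ℕ) → x i = 0}
        = ⋂ i ∈ {i : Fin n | σ ≤ (i:ℕ)}, {x : Euc n | x i = 0} := by
      ext w; simp [Set.mem_iInter]
    rw [this]
    exact isClosed_biInter fun i _ =>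
      isClosed_eq (EuclideanSpace.proj i).continuous continuous_const
  have hEmeas : MeasurableSet (E ∩ ball 0 2) :=
    hEclosed.measurableSet.inter measurableSet_ball
  -- lower bound on the measure of the ball
  have hμball : ENNReal.ofReal ((2 * t) ^ σ) ≤ μ (ball x (2 * d)) := by
    rw [hμ, Measure.restrict_apply' hEmeas]
    have hpi : (volume : Measure (Fin σ → ℝ)) (Metric.ball (π y) t)
        = ENNReal.ofReal ((2 * t) ^ σ) := by
      rw [Real.volume_pi_ball _ ht0, Fintype.card_fin]
    have hHpi : (μH[(σ:ℝ)] : Measure (Fin σ → ℝ)) = volume := by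
      have := hausdorffMeasure_pi_real (ι := Fin σ)
      rwa [Fintype.card_fin] at this
    calc ENNReal.ofReal ((2 * t) ^ σ)
        = μH[(σ:ℝ)] (Metric.ball (π y) t) := by rw [hHpi, hpi]
      _ ≤ μH[(σ:ℝ)] (π '' S) := measure_mono hsub
      _ ≤ μH[(σ:ℝ)] S := by
          have := hπlip.hausdorffMeasure_image_le
            (show (0:ℝ) ≤ (σ:ℝ) from hσpos.le) S
          simpa using this
      _ = μH[(σ:ℝ)] (ball x (2 * d) ∩ (E ∩ ball 0 2)) := by
          rw [hSdef, Set.inter_comm]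
  -- the min is bounded below
  have hmin : ENNReal.ofReal ((2 * t) ^ σ) ≤
      min (μ (ball x (2 * d))) (ENNReal.ofReal ((2 * d) ^ (σ:ℝ))) := by
    refine le_min hμball (ENNReal.ofReal_le_ofReal ?_)
    rw [Real.rpow_natCast (2 * d) σ]
    have ht : t ≤ d := by
      rw [htdef]
      calc d / (2 * Real.sqrt n) ≤ d / 2 :=
            div_le_div_of_nonneg_left hd0.le two_pos (by nlinarith)
        _ ≤ d := by linarith
    exact pow_le_pow_left₀ (by positivity) (by linarith) σ
  -- volume of the ball
  haveI : Nontrivial (Euc n) :=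
    Module.nontrivial_of_finrank_pos (R := ℝ)
      (by rw [finrank_euclideanSpace_fin]; omega)
  have hvol : volume (ball x (2 * d)) = ENNReal.ofReal ((2 * d) ^ (n:ℕ) * v) := by
    rw [Measure.addHaar_ball volume x h2d.le, finrank_euclideanSpace_fin, ← hvofReal,
      ← ENNReal.ofReal_mul (by positivity)]
  have hvolr : (volume (ball x (2 * d))) ^ β = ENNReal.ofReal (((2 * d) ^ (n:ℕ) * v) ^ β) := by
    rw [hvol, ENNReal.ofReal_rpow_of_pos (by positivity)]
  -- the real computation
  have hreal : (A * B * C)⁻¹ * d ^ ((σ:ℝ) - n + α)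
      = (2 * t) ^ σ / (((2 * d) ^ (n:ℕ) * v) ^ β) := by
    have h2t : 2 * t = d / Real.sqrt n := by
      rw [htdef]; field_simp
    have hdnα : (0:ℝ) < d ^ ((n:ℝ) - α) := Real.rpow_pos_of_pos hd0 _
    have hrw0 : ((2 * d) ^ (n:ℕ) * v) ^ β = B * d ^ ((n:ℝ) - α) * C := by
      rw [Real.mul_rpow (by positivity) hvpos.le, ← Real.rpow_natCast (2 * d) n,
        ← Real.rpow_mul (by positivity), hnβ, Real.mul_rpow (by norm_num) hd0.le]
    have hrw2 : (2 * t) ^ σ = d ^ ((σ:ℝ)) / A := by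
      rw [h2t, div_pow, ← Real.rpow_natCast d σ, hAdef]
    have hrw3 : d ^ ((σ:ℝ) - ↑n + α) = d ^ ((σ:ℝ)) / d ^ ((n:ℝ) - α) := by
      rw [← Real.rpow_sub hd0]
      congr 1
      ring
    rw [hrw0, hrw2, hrw3]
    field_simp
  -- put it together
  calc ENNReal.ofReal ((A * B * C)⁻¹ * d ^ ((σ:ℝ) - n + α))
      = ENNReal.ofReal ((2 * t) ^ σ) / ENNReal.ofReal (((2 * d) ^ (n:ℕ) * v) ^ β) := by
        rw [hreal, ENNReal.ofReal_div_of_pos (by positivity)]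
    _ ≤ min (μ (ball x (2 * d))) (ENNReal.ofReal ((2 * d) ^ (σ:ℝ))) /
        (volume (ball x (2 * d))) ^ β :=
        ENNReal.div_le_div hmin (le_of_eq hvolr)
    _ ≤ cappedFracMaximal 4 μ σ α x := by
        rw [cappedFracMaximal]
        exact le_iSup₂_of_le (2 * d) ⟨h2d, h2d4⟩ le_rfl
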